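/- arXiv:2305.08964 — 2 statements merged into one kernel-verified Lean document; each statement's English description precedes it below -/
import Mathlib

section
/- Let $N > p > 1$, $p^\star = \frac{pN}{N-p}$, $\alpha > \frac{N}{N-p}$, and $a, b, S > 0$. Define $M(t) = a + b t^{\alpha - 1}$. Then $\inf_{t > 0} \frac{M(t)}{t^{\frac{p^\star}{p} - 1}} > S$ holds if and only if $a^{\frac{N(\alpha-1) - \alpha p}{p}}\, b > \left[ S \frac{N(\alpha-1) - p\alpha}{N(\alpha-1) - p\alpha + p} \right]^{\frac{(N-p)(\alpha-1)}{p}} \frac{p}{N(\alpha-1) - p\alpha}$. -/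
open Real

theorem inf_M_quotient_gt_iff (N p α a b S : ℝ) (hp : 1 < p) (hN : p < N)
    (hα : N / (N - p) < α) (ha : 0 < a) (hb : 0 < b) (hS : 0 < S)
    (pstar : ℝ) (hpstar : pstar = p * N / (N - p))
    (M : ℝ → ℝ) (hM : ∀ t, M t = a + b * t ^ (α - 1)) :
    S < sInf ((fun t => M t / t ^ (pstar / p - 1)) '' Set.Ioi (0 : ℝ)) ↔
      (S * ((N * (α - 1) - p * α) / (N * (α - 1) - p * α + p))) ^ ((N - p) * (α - 1) / p) *
          (p / (N * (α - 1) - p * α)) <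
        a ^ ((N * (α - 1) - α * p) / p) * b := by
  have hc : 0 < N - p := by linarith
  have hp0 : 0 < p := by linarith
  set q : ℝ := p / (N - p) with hq
  set κ : ℝ := α - 1 with hκ
  have hq0 : 0 < q := div_pos hp0 hc
  have hqκ : q < κ := by
    have h1 : N / (N - p) = 1 + q := by rw [hq]; field_simp; ring
    rw [h1] at hα
    simp only [hκ]; linarith
  have hκ0 : 0 < κ := lt_trans hq0 hqκ
  have hd : 0 < κ - q := by linarith
  have hexp : pstar / p - 1 = q := by
    rw [hpstar, hq]
    field_simp
    ring
  set A : ℝ := a * κ / (κ - q) with hA_def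
  set B : ℝ := b * κ / q with hB_def
  have hA : 0 < A := by positivity
  have hB : 0 < B := by positivity
  set m : ℝ := A ^ ((κ - q) / κ) * B ^ (q / κ) with hm_def
  have hm0 : 0 < m := by positivity
  have hwsum : (κ - q) / κ + q / κ = 1 := by field_simp; ring
  -- lower bound
  have hlb : ∀ t ∈ Set.Ioi (0 : ℝ), m ≤ M t / t ^ (pstar / p - 1) := by
    intro t ht
    have ht0 : (0 : ℝ) < t := ht
    rw [hexp, hM]
    have key := Real.geom_mean_le_arith_mean2_weighted
      (w₁ := (κ - q) / κ) (w₂ := q / κ)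
      (p₁ := A / t ^ q) (p₂ := B * t ^ (κ - q))
      (by positivity) (by positivity) (by positivity) (by positivity) hwsum
    have e1 : (A / t ^ q) ^ ((κ - q) / κ) * (B * t ^ (κ - q)) ^ (q / κ) = m := by
      rw [Real.div_rpow hA.le (by positivity),
          Real.mul_rpow hB.le (by positivity),
          ← Real.rpow_mul ht0.le, ← Real.rpow_mul ht0.le]
      have he : q * ((κ - q) / κ) = (κ - q) * (q / κ) := by ring
      rw [he, hm_def]
      have hpos : (0 : ℝ) < t ^ ((κ - q) * (q / κ)) := Real.rpow_pos_of_pos ht0 _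
      field_simp
    have e2 : (κ - q) / κ * (A / t ^ q) + q / κ * (B * t ^ (κ - q)) =
        (a + b * t ^ κ) / t ^ q := by
      rw [Real.rpow_sub ht0, hA_def, hB_def]
      have hpos : (0 : ℝ) < t ^ q := Real.rpow_pos_of_pos ht0 _
      field_simp
    rw [e1, e2] at key
    exact key
  -- the minimum is attained
  set r : ℝ := a * q / (b * (κ - q)) with hr_def
  have hr : 0 < r := by positivity
  set t0 : ℝ := r ^ (1 / κ) with ht0_def
  have ht0pos : 0 < t0 := Real.rpow_pos_of_pos hr _
  have ht0κ : t0 ^ κ = r := by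
    rw [ht0_def, ← Real.rpow_mul hr.le, one_div, inv_mul_cancel₀ hκ0.ne', Real.rpow_one]
  have ht0q : t0 ^ q = r ^ (q / κ) := by
    rw [ht0_def, ← Real.rpow_mul hr.le]
    congr 1
    field_simp
  have hBr : B * r = A := by
    rw [hB_def, hr_def, hA_def]
    field_simp
  have hmr : m * r ^ (q / κ) = A := by
    rw [hm_def, mul_assoc, ← Real.mul_rpow hB.le hr.le, hBr,
        ← Real.rpow_add hA, hwsum, Real.rpow_one]
  have hf0 : M t0 / t0 ^ (pstar / p - 1) = m := by
    rw [hexp, hM, ht0κ, ht0q]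
    have hbr : a + b * r = A := by rw [hA_def, hr_def]; field_simp; ring
    rw [hbr, ← hmr]
    field_simp
  have hmem : m ∈ (fun t => M t / t ^ (pstar / p - 1)) '' Set.Ioi (0 : ℝ) :=
    ⟨t0, ht0pos, hf0⟩
  have hInf : sInf ((fun t => M t / t ^ (pstar / p - 1)) '' Set.Ioi (0 : ℝ)) = m := by
    refine le_antisymm (csInf_le ⟨m, ?_⟩ hmem) (le_csInf ⟨m, hmem⟩ ?_)
    · rintro x ⟨t, ht, rfl⟩; exact hlb t ht
    · rintro x ⟨t, ht, rfl⟩; exact hlb t ht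
  rw [hInf]
  -- rewrite constants in the target
  have hc1 : N * (α - 1) - p * α = (N - p) * (κ - q) := by
    rw [hκ, hq]; field_simp; ring
  have hc2 : N * (α - 1) - p * α + p = (N - p) * κ := by
    rw [hc1, hκ, hq]; field_simp; ring
  have hc3 : (N * (α - 1) - p * α) / (N * (α - 1) - p * α + p) = (κ - q) / κ := by
    rw [hc2, hc1, mul_div_mul_left _ _ hc.ne']
  have hc4 : (N - p) * (α - 1) / p = κ / q := by
    rw [hκ, hq]; field_simp
  have hc5 : p / (N * (α - 1) - p * α) = q / (κ - q) := by
    rw [hc1, hq]; rw [div_div]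
  have hc6 : (N * (α - 1) - α * p) / p = (κ - q) / q := by
    have : N * (α - 1) - α * p = N * (α - 1) - p * α := by ring
    rw [this, hc1, hq]; field_simp
  rw [hc3, hc4, hc5, hc6]
  -- now reduce S < m to the power-(κ/q) inequality
  set e : ℝ := κ / q with he_def
  set e' : ℝ := (κ - q) / q with he'_def
  have he0 : 0 < e := by positivity
  set D : ℝ := (κ - q) / κ with hD_def
  have hD0 : 0 < D := by positivity
  have step1 : S < m ↔ S ^ e < m ^ e :=
    (Real.rpow_lt_rpow_iff hS.le hm0.le he0).symm
  have hme : m ^ e = A ^ e' * B := by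
    rw [hm_def, Real.mul_rpow (by positivity) (by positivity),
        ← Real.rpow_mul hA.le, ← Real.rpow_mul hB.le]
    have h1 : (κ - q) / κ * e = e' := by rw [he_def, he'_def]; field_simp
    have h2 : q / κ * e = 1 := by rw [he_def]; field_simp
    rw [h1, h2, Real.rpow_one]
  set P : ℝ := D ^ e * (q / (κ - q)) with hP_def
  have hP0 : 0 < P := by positivity
  have hkey : A ^ e' * B * P = a ^ e' * b := by
    have hAa : A = a / D := by rw [hA_def, hD_def]; field_simp
    rw [hAa, Real.div_rpow ha.le hD0.le, hP_def]
    have hDe : D ^ e = D ^ e' * D := by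
      have : e = e' + 1 := by rw [he_def, he'_def]; field_simp; ring
      rw [this, Real.rpow_add hD0, Real.rpow_one]
    rw [hDe, hB_def, hD_def]
    have hq' : q ≠ 0 := hq0.ne'
    have hd' : κ - q ≠ 0 := hd.ne'
    have hκ' : κ ≠ 0 := hκ0.ne'
    have hpow : (0:ℝ) < ((κ - q) / κ) ^ e' := by positivity
    field_simp
  have step2 : S ^ e < m ^ e ↔ (S * D) ^ e * (q / (κ - q)) < a ^ e' * b := by
    rw [hme, Real.mul_rpow hS.le hD0.le, ← hkey]
    rw [mul_assoc, ← hP_def]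
    exact (mul_lt_mul_iff_of_pos_right hP0).symm
  rw [step1, step2]
end

section
/- Let $N > p > 1$, $p^\star = \frac{pN}{N-p}$, $\alpha > \frac{N}{N-p}$, and $a, b, S > 0$. Define $\hat{M}(t) = at + \frac{b}{\alpha} t^{\alpha}$. Then $\inf_{t > 0} \frac{\hat{M}(t)}{t^{p^\star/p}} \geq \frac{p}{p^\star} S$ holds if and only if $a^{\frac{N(\alpha-1) - \alpha p}{p}}\, b \geq \left[ \frac{p}{p^\star} S \frac{N(\alpha-1) - p\alpha}{N(\alpha-1) - p\alpha + p} \right]^{\frac{(N-p)(\alpha-1)}{p}} \alpha \frac{p}{N(\alpha-1) - p\alpha}$. -/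
open Real

theorem inf_Mhat_quotient_ge_iff (N p α a b S : ℝ) (hp : 1 < p) (hN : p < N)
    (hα : N / (N - p) < α) (ha : 0 < a) (hb : 0 < b) (hS : 0 < S)
    (pstar : ℝ) (hpstar : pstar = p * N / (N - p))
    (Mhat : ℝ → ℝ) (hMhat : ∀ t, Mhat t = a * t + b / α * t ^ α) :
    p / pstar * S ≤ sInf ((fun t => Mhat t / t ^ (pstar / p)) '' Set.Ioi (0 : ℝ)) ↔
      (p / pstar * S * ((N * (α - 1) - p * α) / (N * (α - 1) - p * α + p))) ^
            ((N - p) * (α - 1) / p) * (α * (p / (N * (α - 1) - p * α))) ≤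
        a ^ ((N * (α - 1) - α * p) / p) * b := by
  have hNp : 0 < N - p := by linarith
  set q : ℝ := N / (N - p) with hq
  have hq1 : 1 < q := (one_lt_div hNp).mpr (by linarith)
  have hα1 : (1:ℝ) < α := lt_trans hq1 hα
  have hαpos : (0:ℝ) < α := by linarith
  have hq1' : 0 < q - 1 := by linarith
  have hαq : 0 < α - q := by linarith
  have hα1' : 0 < α - 1 := by linarith
  have hppos : (0:ℝ) < p := by linarith
  have hNpos : (0:ℝ) < N := by linarith
  have hpstarpos : 0 < pstar := by rw [hpstar]; positivity
  have hpq : pstar / p = q := by rw [hpstar, hq]; field_simp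
  set t0 : ℝ := (a * α * (q - 1) / (b * (α - q))) ^ ((α - 1)⁻¹) with ht0def
  have hbase : 0 < a * α * (q - 1) / (b * (α - q)) :=
    div_pos (mul_pos (mul_pos ha hαpos) hq1') (mul_pos hb hαq)
  have ht0pos : 0 < t0 := Real.rpow_pos_of_pos hbase _
  have ht0pow : t0 ^ (α - 1) = a * α * (q - 1) / (b * (α - q)) :=
    Real.rpow_inv_rpow hbase.le (by linarith)
  set A : ℝ := a * t0 ^ (1 - q) with hA
  have hApos : 0 < A := mul_pos ha (Real.rpow_pos_of_pos ht0pos _)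
  set m : ℝ := A * ((α - 1) / (α - q)) with hm
  have hmpos : 0 < m := mul_pos hApos (div_pos hα1' hαq)
  -- second term at t0
  have hsecond : b / α * t0 ^ (α - q) = A * ((q - 1) / (α - q)) := by
    have h1 : t0 ^ (α - q) = t0 ^ (1 - q) * t0 ^ (α - 1) := by
      rw [← Real.rpow_add ht0pos]; ring_nf
    rw [h1, ht0pow, hA]
    field_simp
  -- quotient formula
  have hF : ∀ t : ℝ, 0 < t → Mhat t / t ^ (pstar / p)
      = a * t ^ (1 - q) + b / α * t ^ (α - q) := by
    intro t ht
    rw [hMhat, hpq]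
    have h1 : t ^ (1 - q) = t / t ^ q := by
      rw [Real.rpow_sub ht, Real.rpow_one]
    have h2 : t ^ (α - q) = t ^ α / t ^ q := by
      rw [Real.rpow_sub ht]
    rw [h1, h2]
    field_simp
  -- value at t0
  have hFt0 : Mhat t0 / t0 ^ (pstar / p) = m := by
    rw [hF t0 ht0pos, hsecond, hm, hA]
    field_simp
    ring
  -- lower bound
  have hlow : ∀ t : ℝ, 0 < t → m ≤ Mhat t / t ^ (pstar / p) := by
    intro t ht
    rw [hF t ht]
    set s : ℝ := t / t0 with hs
    have hspos : 0 < s := by positivity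
    have hts : t = s * t0 := by rw [hs]; field_simp
    have hx : t ^ (1 - q) = t0 ^ (1 - q) * s ^ (1 - q) := by
      rw [hts, Real.mul_rpow hspos.le ht0pos.le]; ring
    have hy : t ^ (α - q) = t0 ^ (α - q) * s ^ (α - q) := by
      rw [hts, Real.mul_rpow hspos.le ht0pos.le]; ring
    have key : (1:ℝ) ≤ (α - q) / (α - 1) * s ^ (1 - q) + (q - 1) / (α - 1) * s ^ (α - q) := by
      have := Real.geom_mean_le_arith_mean2_weighted
        (div_nonneg hαq.le hα1'.le)
        (div_nonneg hq1'.le hα1'.le)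
        (Real.rpow_nonneg hspos.le (1 - q)) (Real.rpow_nonneg hspos.le (α - q))
        (by rw [← add_div, show α - q + (q - 1) = α - 1 by ring,
          div_self hα1'.ne'])
      have hprod : (s ^ (1 - q)) ^ ((α - q) / (α - 1)) * (s ^ (α - q)) ^ ((q - 1) / (α - 1))
          = 1 := by
        rw [← Real.rpow_mul hspos.le, ← Real.rpow_mul hspos.le, ← Real.rpow_add hspos]
        have hz : (1 - q) * ((α - q) / (α - 1)) + (α - q) * ((q - 1) / (α - 1)) = 0 := by
          field_simp
          ring
        rw [hz, Real.rpow_zero]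
      rw [hprod] at this
      exact this
    have h2 : b / α * t ^ (α - q) = A * ((q - 1) / (α - q)) * s ^ (α - q) := by
      rw [hy, ← mul_assoc, hsecond]
    have h1 : a * t ^ (1 - q) = A * s ^ (1 - q) := by
      rw [hx, hA]; ring
    rw [h1, h2]
    have expand : A * s ^ (1 - q) + A * ((q - 1) / (α - q)) * s ^ (α - q)
        = m * ((α - q) / (α - 1) * s ^ (1 - q) + (q - 1) / (α - 1) * s ^ (α - q)) := by
      rw [hm]; field_simp
    rw [expand]
    calc m = m * 1 := by ring
    _ ≤ _ := by
      exact mul_le_mul_of_nonneg_left key hmpos.le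
  -- infimum
  have hsInf : sInf ((fun t => Mhat t / t ^ (pstar / p)) '' Set.Ioi (0 : ℝ)) = m := by
    refine IsLeast.csInf_eq ⟨⟨t0, ht0pos, hFt0⟩, ?_⟩
    rintro x ⟨t, ht, rfl⟩
    exact hlow t ht
  rw [hsInf]
  -- final iff
  set c : ℝ := p / pstar * S with hc
  have hcpos : 0 < c := by positivity
  set K : ℝ := (α - 1) / (q - 1) with hK
  have hKpos : 0 < K := div_pos hα1' hq1'
  have step1 : c ≤ m ↔ c * ((α - q) / (α - 1)) ≤ A := by
    rw [hm]
    rw [← mul_le_mul_iff_left₀ (div_pos hαq hα1')]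
    constructor
    · intro h; calc c * ((α - q) / (α - 1)) ≤ A * ((α - 1) / (α - q)) * ((α - q) / (α - 1)) := h
        _ = A := by field_simp
    · intro h
      have : A * ((α - 1) / (α - q)) * ((α - q) / (α - 1)) = A := by field_simp
      rw [this]; exact h
  have step2 : c * ((α - q) / (α - 1)) ≤ A ↔
      (c * ((α - q) / (α - 1))) ^ K ≤ A ^ K :=
    (Real.rpow_le_rpow_iff (mul_pos hcpos (div_pos hαq hα1')).le hApos.le hKpos).symm
  have hAK : A ^ K = a ^ (K - 1) * b * ((α - q) / (α * (q - 1))) := by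
    have he : (1 - q) * K = -(α - 1) := by rw [hK]; field_simp; ring
    rw [hA, Real.mul_rpow ha.le (Real.rpow_nonneg ht0pos.le _), ← Real.rpow_mul ht0pos.le,
      he, Real.rpow_neg ht0pos.le, ht0pow, Real.rpow_sub ha, Real.rpow_one]
    have haK : (0:ℝ) < a ^ K := Real.rpow_pos_of_pos ha K
    field_simp
  have step3 : (c * ((α - q) / (α - 1))) ^ K ≤ A ^ K ↔
      (c * ((α - q) / (α - 1))) ^ K * (α * (q - 1) / (α - q)) ≤ a ^ (K - 1) * b := by
    rw [hAK, ← mul_le_mul_iff_left₀ (div_pos (mul_pos hαpos hq1') hαq)]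
    constructor <;> intro h
    · calc (c * ((α - q) / (α - 1))) ^ K * (α * (q - 1) / (α - q)) ≤
          a ^ (K - 1) * b * ((α - q) / (α * (q - 1))) * (α * (q - 1) / (α - q)) := h
        _ = a ^ (K - 1) * b := by field_simp
    · have e : a ^ (K - 1) * b * ((α - q) / (α * (q - 1))) * (α * (q - 1) / (α - q))
          = a ^ (K - 1) * b := by field_simp
      rw [e]; exact h
  rw [step1, step2, step3]
  -- match the statement form
  have hD : N * (α - 1) - p * α = (α - q) * (N - p) := by
    rw [hq]; field_simp; ring
  have hDpos : 0 < N * (α - 1) - p * α := by rw [hD]; exact mul_pos hαq hNp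
  have hq1eq : q - 1 = p / (N - p) := by
    rw [hq]; field_simp [hNp.ne']; ring
  have hbase_eq : c * ((α - q) / (α - 1)) =
      c * ((N * (α - 1) - p * α) / (N * (α - 1) - p * α + p)) := by
    have hden : N * (α - 1) - p * α + p = (N - p) * (α - 1) := by ring
    rw [hden, hD]
    congr 1
    rw [mul_comm (α - q) (N - p), mul_div_mul_left _ _ hNp.ne']
  have hK_eq : K = (N - p) * (α - 1) / p := by
    rw [hK, hq1eq]
    field_simp [hppos.ne', hNp.ne']
  have hmul_eq : α * (q - 1) / (α - q) = α * (p / (N * (α - 1) - p * α)) := by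
    rw [hD, hq1eq]
    field_simp [hNp.ne', hαq.ne', hDpos.ne', hαpos.ne']
  have hKm1 : K - 1 = (N * (α - 1) - α * p) / p := by
    rw [hK, hq1eq]
    field_simp [hppos.ne', hNp.ne']
    ring
  rw [hbase_eq, hKm1, hmul_eq, hK_eq]
end
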